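/- For distinct real numbers y₁, …, yₙ, the n-fold convolution of the exponential functions t ↦ e^{yᵢ t} satisfies (e^{y₁ t} * ⋯ * e^{yₙ t})(t) = ∑_{i=1}^{n} e^{yᵢ t} / ∏_{j ≠ i} (yᵢ − yⱼ) for all t ≥ 0. -/

import Mathlib

open MeasureTheory

/-- Iterated convolution (on `[0,∞)`, `(f * g) t = ∫₀ᵗ f s · g (t - s) ds`) of the
exponential functions `t ↦ exp (yᵢ t)` for a list `y₁, …, yₙ` of reals. -/
noncomputable def expConv : List ℝ → ℝ → ℝ
  | [], _ => 1
  | [y], t => Real.exp (y * t)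
  | y :: ys, t => ∫ s in (0:ℝ)..t, Real.exp (y * s) * expConv ys (t - s)

lemma lagrange_eval (S : Finset ℝ) (hS : S.Nonempty) (a : ℝ) :
    ∑ x ∈ S, ∏ x' ∈ S.erase x, ((x - x')⁻¹ * (a - x')) = 1 := by
  have h := Lagrange.sum_basis (Function.injective_id.injOn (s := (S : Set ℝ))) hS
  have h2 := congrArg (Polynomial.eval a) h
  simpa [Polynomial.eval_finset_sum, Lagrange.basis, Polynomial.eval_prod,
    Lagrange.basisDivisor] using h2

lemma partial_frac (S : Finset ℝ) (hS : S.Nonempty) (a : ℝ) (ha : a ∉ S) :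
    ∑ x ∈ S, (1 / ∏ x' ∈ S.erase x, (x - x')) / (a - x) = 1 / ∏ x ∈ S, (a - x) := by
  have hne : ∀ x ∈ S, a - x ≠ 0 := fun x hx => sub_ne_zero_of_ne (fun h => ha (h ▸ hx))
  have key := lagrange_eval S hS a
  have hP : ∏ x ∈ S, (a - x) ≠ 0 := Finset.prod_ne_zero_iff.mpr hne
  rw [eq_div_iff hP, Finset.sum_mul]
  calc ∑ x ∈ S, (1 / ∏ x' ∈ S.erase x, (x - x')) / (a - x) * ∏ x ∈ S, (a - x)
      = ∑ x ∈ S, ∏ x' ∈ S.erase x, ((x - x')⁻¹ * (a - x')) := by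
        apply Finset.sum_congr rfl
        intro x hx
        have hax := hne x hx
        have hPx : (∏ x' ∈ S.erase x, (x - x')) ≠ 0 :=
          Finset.prod_ne_zero_iff.mpr fun x' hx' =>
            sub_ne_zero_of_ne (Ne.symm (Finset.mem_erase.mp hx').1)
        rw [Finset.prod_mul_distrib, ← Finset.mul_prod_erase S _ hx, Finset.prod_inv_distrib]
        field_simp
    _ = 1 := key

lemma integral_exp_mul' (c t : ℝ) (hc : c ≠ 0) :
    ∫ s in (0:ℝ)..t, Real.exp (c * s) = (Real.exp (c * t) - 1) / c := by
  have hderiv : ∀ s ∈ Set.uIcc (0:ℝ) t,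
      HasDerivAt (fun u => Real.exp (c * u) / c) (Real.exp (c * s)) s := by
    intro s _
    have h := (((hasDerivAt_id s).const_mul c).exp).div_const c
    refine h.congr_deriv ?_
    simp only [id, mul_one]
    field_simp
  rw [intervalIntegral.integral_eq_sub_of_hasDerivAt hderiv
    ((by fun_prop : Continuous fun s => Real.exp (c * s)).intervalIntegrable 0 t)]
  simp
  ring

lemma expConv_main : ∀ (l : List ℝ), l ≠ [] → l.Nodup → ∀ t : ℝ, 0 ≤ t →
    expConv l t = ∑ x ∈ l.toFinset, Real.exp (x * t) /
      ∏ x' ∈ l.toFinset.erase x, (x - x') := by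
  intro l
  induction l with
  | nil => simp
  | cons a m ih =>
    cases m with
    | nil => intro _ _ t _; simp [expConv]
    | cons b l' =>
      intro _ hnd t ht
      obtain ⟨ha, hndm⟩ := List.nodup_cons.mp hnd
      set M : Finset ℝ := (b :: l').toFinset with hM
      have haM : a ∉ M := by simpa [hM] using ha
      have hMne : M.Nonempty := ⟨b, by simp [hM]⟩
      set K : ℝ → ℝ := fun x => ∏ x' ∈ M.erase x, (x - x') with hK
      have ihm := ih (by simp) hndm
      have hKne : ∀ x ∈ M, K x ≠ 0 := by
        intro x hx
        exact Finset.prod_ne_zero_iff.mpr fun x' hx' =>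
          sub_ne_zero_of_ne (Ne.symm (Finset.mem_erase.mp hx').1)
      have haxne : ∀ x ∈ M, a - x ≠ 0 := fun x hx =>
        sub_ne_zero_of_ne (fun h => haM (h ▸ hx))
      calc expConv (a :: b :: l') t
          = ∫ s in (0:ℝ)..t, Real.exp (a * s) * expConv (b :: l') (t - s) := rfl
        _ = ∫ s in (0:ℝ)..t, ∑ x ∈ M, Real.exp (a * s) * (Real.exp (x * (t - s)) / K x) := by
            apply intervalIntegral.integral_congr
            intro s hs
            rw [Set.uIcc_of_le ht] at hs
            simp only []
            rw [ihm (t - s) (by linarith [hs.2]), Finset.mul_sum]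
        _ = ∑ x ∈ M, ∫ s in (0:ℝ)..t, Real.exp (x * t) / K x * Real.exp ((a - x) * s) := by
            rw [← intervalIntegral.integral_finset_sum]
            · apply intervalIntegral.integral_congr
              intro s _
              apply Finset.sum_congr rfl
              intro x _
              rw [mul_div_assoc', div_mul_eq_mul_div]
              congr 1
              rw [← Real.exp_add, ← Real.exp_add]
              ring_nf
            · intro x _
              exact ((by fun_prop : Continuous fun s =>
                Real.exp (x * t) / K x * Real.exp ((a - x) * s)).intervalIntegrable 0 t)
        _ = ∑ x ∈ M, Real.exp (x * t) / K x * ((Real.exp ((a - x) * t) - 1) / (a - x)) := by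
            apply Finset.sum_congr rfl
            intro x hx
            rw [intervalIntegral.integral_const_mul, integral_exp_mul' _ _ (haxne x hx)]
        _ = ∑ x ∈ M, (Real.exp (a * t) * ((1 / K x) / (a - x)) +
              Real.exp (x * t) / ((x - a) * K x)) := by
            apply Finset.sum_congr rfl
            intro x hx
            have hax := haxne x hx
            have hxa : x - a ≠ 0 := fun h => hax (by linarith [sub_eq_zero.mp h])
            have hKx := hKne x hx
            have hexp : Real.exp ((a - x) * t) * Real.exp (x * t) = Real.exp (a * t) := by
              rw [← Real.exp_add]; ring_nf
            rw [← hexp]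
            field_simp
            ring
        _ = ∑ x ∈ (a :: b :: l').toFinset, Real.exp (x * t) /
              ∏ x' ∈ (a :: b :: l').toFinset.erase x, (x - x') := by
            rw [Finset.sum_add_distrib, ← Finset.mul_sum, partial_frac M hMne a haM,
              mul_one_div]
            rw [show (a :: b :: l').toFinset = insert a M by simp [hM]]
            rw [Finset.sum_insert haM, Finset.erase_insert haM]
            congr 1
            apply Finset.sum_congr rfl
            intro x hx
            have hxa : x ≠ a := fun h => haM (h ▸ hx)
            rw [Finset.erase_insert_of_ne hxa.symm,
              Finset.prod_insert (fun h => haM (Finset.mem_of_mem_erase h))]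

/-- For pairwise distinct reals `y₁, …, yₙ`, the `n`-fold convolution of the
exponentials satisfies `(e^{y₁ t} * ⋯ * e^{yₙ t})(t) = ∑ᵢ e^{yᵢ t} / ∏_{j ≠ i} (yᵢ - yⱼ)`
for all `t ≥ 0`. -/
theorem stmt_5 (n : ℕ) (hn : 1 ≤ n) (y : Fin n → ℝ) (hy : Function.Injective y)
    (t : ℝ) (ht : 0 ≤ t) :
    expConv (List.ofFn y) t =
      ∑ i, Real.exp (y i * t) / ∏ j ∈ Finset.univ.erase i, (y i - y j) := by
  have hne : List.ofFn y ≠ [] := by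
    simp only [ne_eq, ← List.length_eq_zero_iff, List.length_ofFn]
    omega
  have hnd : (List.ofFn y).Nodup := List.nodup_ofFn.mpr hy
  rw [expConv_main (List.ofFn y) hne hnd t ht]
  have hTF : (List.ofFn y).toFinset = Finset.image y Finset.univ := by
    ext x; simp [List.mem_ofFn]
  rw [hTF, Finset.sum_image (fun i _ j _ h => hy h)]
  apply Finset.sum_congr rfl
  intro i _
  congr 1
  rw [← Finset.image_erase hy Finset.univ i, Finset.prod_image (fun a _ b _ h => hy h)]
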